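/- Let h : S¹ → S¹ be a continuous map of degree k. Then h has at least |k - 1| fixed points. -/

import Mathlib

open Real Set

namespace CircleDeg


lemma re_pos_of_dist_lt {a b : Circle} (h : dist a b < 1) :
    0 < ((a / b : Circle) : ℂ).re := by
  have hab : ((a / b : Circle) : ℂ) = (a : ℂ) * (starRingEnd ℂ) (b : ℂ) := by
    rw [Circle.coe_div, div_eq_mul_inv, ← Circle.coe_inv, Circle.coe_inv_eq_conj]
  have h2 : Complex.normSq ((a : ℂ) - (b : ℂ))
      = 2 - 2 * ((a : ℂ) * (starRingEnd ℂ) (b : ℂ)).re := by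
    rw [Complex.normSq_sub]
    simp [Circle.normSq_coe]
    ring
  have hd : dist a b = ‖(a : ℂ) - (b : ℂ)‖ := by
    rw [← dist_eq_norm]; rfl
  have hsq : Complex.normSq ((a : ℂ) - (b : ℂ)) < 1 := by
    rw [← Complex.sq_norm, ← hd]
    nlinarith [dist_nonneg (x := a) (y := b)]
  rw [hab]
  nlinarith

lemma exp_sum {ι : Type*} (s : Finset ι) (g : ι → ℝ) :
    Circle.exp (∑ i ∈ s, g i) = ∏ i ∈ s, Circle.exp (g i) := by
  classical
  induction s using Finset.induction_on with
  | empty => simp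
  | insert _ _ h ih => rw [Finset.sum_insert h, Finset.prod_insert h, Circle.exp_add, ih]

lemma exp_zpow (x : ℝ) (d : ℤ) : Circle.exp ((d : ℝ) * x) = Circle.exp x ^ d := by
  induction d using Int.induction_on with
  | zero => simp
  | succ n ih =>
      have : ((n : ℤ) + 1 : ℝ) * x = (n : ℤ) * x + x := by push_cast; ring
      rw [show (((n : ℤ) + 1 : ℤ) : ℝ) = ((n : ℤ) : ℝ) + 1 by push_cast; ring]
      rw [add_mul, one_mul, Circle.exp_add, ih, zpow_add_one]
  | pred n ih =>
      rw [show ((-(n : ℤ) - 1 : ℤ) : ℝ) = ((-(n : ℤ) : ℤ) : ℝ) - 1 by push_cast; ring]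
      rw [sub_mul, one_mul, Circle.exp_sub, ih, zpow_sub_one]
      rfl



lemma exists_lift (γ : ℝ → Circle) (hγ : Continuous γ) :
    ∃ f : ℝ → ℝ, ContinuousOn f (Icc 0 1) ∧ ∀ t ∈ Icc (0:ℝ) 1, Circle.exp (f t) = γ t := by
  have huc := isCompact_Icc.uniformContinuousOn_of_continuous
    (s := Icc (0:ℝ) 1) (hγ.continuousOn)
  replace huc := Metric.uniformContinuousOn_iff.mp huc
  obtain ⟨δ, hδpos, hδ⟩ := huc 1 one_pos
  obtain ⟨n, hn⟩ := exists_nat_one_div_lt hδpos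
  set N : ℕ := n + 1 with hNdef
  have hN : (0:ℝ) < (N : ℝ) := by positivity
  have hmesh : 1 / (N : ℝ) < δ := by exact_mod_cast hn
  set p : ℕ → ℝ → ℝ := fun j t => max ((j : ℝ)/N) (min t (((j : ℝ)+1)/N)) with hp
  have hplb : ∀ (j : ℕ) (t : ℝ), (j : ℝ)/N ≤ p j t := fun j t => le_max_left _ _
  have hstep : ∀ (j : ℕ), (j : ℝ)/N ≤ ((j : ℝ)+1)/N := fun j =>
    (div_le_div_iff_of_pos_right hN).mpr (by linarith)
  have hpub : ∀ (j : ℕ) (t : ℝ), p j t ≤ ((j : ℝ)+1)/N := fun j t =>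
    max_le (hstep j) (min_le_right _ _)
  have hjmem : ∀ j : ℕ, j < N → (j : ℝ)/N ∈ Icc (0:ℝ) 1 := by
    intro j hj
    constructor
    · positivity
    · rw [div_le_one hN]
      exact_mod_cast Nat.le_of_lt_succ (Nat.lt_succ_of_lt hj)
  have hpmem : ∀ (j : ℕ) (t : ℝ), j < N → p j t ∈ Icc (0:ℝ) 1 := by
    intro j t hj
    constructor
    · exact le_trans (by positivity) (hplb j t)
    · refine le_trans (hpub j t) ?_
      rw [div_le_one hN]
      exact_mod_cast hj
  have hclose : ∀ (j : ℕ) (t : ℝ), j < N → dist (γ (p j t)) (γ ((j : ℝ)/N)) < 1 := by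
    intro j t hj
    refine hδ _ (hpmem j t hj) _ (hjmem j hj) ?_
    rw [Real.dist_eq, abs_of_nonneg (by linarith [hplb j t])]
    calc p j t - (j : ℝ)/N ≤ ((j : ℝ)+1)/N - (j : ℝ)/N := by linarith [hpub j t]
      _ = 1 / N := by ring
      _ < δ := hmesh
  set f : ℝ → ℝ := fun t => Complex.arg ((γ 0 : Circle) : ℂ) +
      ∑ j ∈ Finset.range N, Complex.arg (((γ (p j t) / γ ((j : ℝ)/N) : Circle)) : ℂ)
    with hf
  refine ⟨f, ?_, ?_⟩
  · apply ContinuousOn.add continuousOn_const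
    apply Continuous.continuousOn
    apply continuous_finset_sum
    intro j hj
    have hjN := Finset.mem_range.mp hj
    have hpc : Continuous fun t => p j t :=
      continuous_const.max (continuous_id.min continuous_const)
    have hqc : Continuous fun t => (γ (p j t) / γ ((j : ℝ)/N) : Circle) :=
      (hγ.comp hpc).div' continuous_const
    rw [continuous_iff_continuousAt]
    intro t
    have hre : 0 < (((γ (p j t) / γ ((j : ℝ)/N)) : Circle) : ℂ).re :=
      re_pos_of_dist_lt (hclose j t hjN)
    have hcoe : Continuous fun t => (Subtype.val (γ (p j t) / γ ((j : ℝ)/N) : Circle) : ℂ) :=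
      continuous_subtype_val.comp hqc
    have hre' : 0 < (Subtype.val (γ (p j t) / γ ((j : ℝ)/N) : Circle) : ℂ).re := hre
    show ContinuousAt (fun t => Complex.arg (Subtype.val (γ (p j t) / γ ((j : ℝ)/N) : Circle))) t
    exact ContinuousAt.comp (g := Complex.arg)
      (f := fun t => (Subtype.val (γ (p j t) / γ ((j : ℝ)/N) : Circle) : ℂ)) (x := t)
      (Complex.continuousAt_arg (Complex.mem_slitPlane_iff.mpr (Or.inl hre')))
      hcoe.continuousAt
  · intro t ht
    rw [hf]
    simp only []
    rw [Circle.exp_add, exp_sum]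
    have h0 : Circle.exp (Complex.arg ((γ 0 : Circle) : ℂ)) = γ 0 := Circle.exp_arg _
    have harg : ∀ j ∈ Finset.range N,
        Circle.exp (Complex.arg (((γ (p j t) / γ ((j : ℝ)/N) : Circle)) : ℂ))
          = γ (p j t) / γ ((j : ℝ)/N) := fun j _ => Circle.exp_arg _
    rw [h0, Finset.prod_congr rfl harg]
    have tel : ∀ m : ℕ, m ≤ N →
        ∏ j ∈ Finset.range m, (γ (p j t) / γ ((j : ℝ)/N)) = γ (min t ((m : ℝ)/N)) / γ 0 := by
      intro m
      induction m with
      | zero =>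
          intro _
          simp only [Finset.range_zero, Finset.prod_empty, Nat.cast_zero, zero_div]
          rw [min_eq_right ht.1, div_self']
      | succ m ih =>
          intro hm
          rw [Finset.prod_range_succ, ih (by omega)]
          rcases le_total t ((m : ℝ)/N) with h1 | h1
          · have hmin1 : min t ((m : ℝ)/N) = t := min_eq_left h1
            have hmin2 : min t (((m : ℝ)+1)/N) = t := min_eq_left (h1.trans (hstep m))
            have hpe : p m t = (m : ℝ)/N := by
              rw [hp]; simp only []
              rw [hmin2]
              exact max_eq_left h1
            have hcast : ((m+1 : ℕ) : ℝ) = (m : ℝ) + 1 := by push_cast; ring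
            rw [hcast, hmin1, hmin2, hpe, div_self', mul_one]
          · have hmin1 : min t ((m : ℝ)/N) = (m : ℝ)/N := min_eq_right h1
            have hpe : p m t = min t (((m : ℝ)+1)/N) := by
              rw [hp]; simp only []
              exact max_eq_right (le_min h1 (hstep m))
            have hcast : ((m+1 : ℕ) : ℝ) = (m : ℝ) + 1 := by push_cast; ring
            rw [hcast, hmin1, hpe]
            exact div_mul_div_cancel' _ _ _
    rw [tel N le_rfl, div_self hN.ne', min_eq_left ht.2, mul_div_cancel]



lemma lift_winding_unique {γ : ℝ → Circle} {f g : ℝ → ℝ}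
    (hf : ContinuousOn f (Icc 0 1)) (hg : ContinuousOn g (Icc 0 1))
    (hf' : ∀ t ∈ Icc (0:ℝ) 1, Circle.exp (f t) = γ t)
    (hg' : ∀ t ∈ Icc (0:ℝ) 1, Circle.exp (g t) = γ t) :
    f 1 - f 0 = g 1 - g 0 := by
  set d : ℝ → ℝ := fun t => f t - g t with hd
  have hdc : ContinuousOn d (Icc 0 1) := hf.sub hg
  have hint : ∀ t ∈ Icc (0:ℝ) 1, ∃ m : ℤ, d t = m * (2 * π) := by
    intro t ht
    obtain ⟨m, hm⟩ := Circle.exp_eq_exp.mp ((hf' t ht).trans (hg' t ht).symm)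
    exact ⟨m, by simp only [hd]; linarith⟩
  have h0 : (0:ℝ) ∈ Icc (0:ℝ) 1 := left_mem_Icc.mpr zero_le_one
  have h1 : (1:ℝ) ∈ Icc (0:ℝ) 1 := right_mem_Icc.mpr zero_le_one
  obtain ⟨m0, hm0⟩ := hint 0 h0
  obtain ⟨m1, hm1⟩ := hint 1 h1
  have key : d 1 = d 0 := by
    by_contra hne
    have hmne : m0 ≠ m1 := by
      intro hc; apply hne; rw [hm0, hm1, hc]
    set c : ℤ := min m0 m1 with hc
    set v : ℝ := (c : ℝ) * (2 * π) + π with hv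
    have hone : ∀ (a b : ℤ), a ≠ b → a ≤ b → (a:ℝ) * (2*π) + π ≤ (b:ℝ) * (2*π) ∧
        (a:ℝ)*(2*π) ≤ (a:ℝ)*(2*π) + π := by
      intro a b hab hle
      have : (a:ℝ) + 1 ≤ b := by exact_mod_cast (by omega : a + 1 ≤ b)
      constructor <;> nlinarith [pi_pos]
    have hvmem : v ∈ uIcc (d 0) (d 1) := by
      rw [Set.mem_uIcc]
      rcases le_total m0 m1 with hle | hle
      · left
        obtain ⟨hA, hB⟩ := hone m0 m1 hmne hle
        have hcv : c = m0 := min_eq_left hle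
        rw [hm0, hm1, hv, hcv]
        exact ⟨hB, hA⟩
      · right
        obtain ⟨hA, hB⟩ := hone m1 m0 (Ne.symm hmne) hle
        have hcv : c = m1 := min_eq_right hle
        rw [hm0, hm1, hv, hcv]
        exact ⟨hB, hA⟩
    have hsub := intermediate_value_uIcc (α := ℝ) (a := 0) (b := 1) (f := d)
      (by rwa [Set.uIcc_of_le zero_le_one])
    obtain ⟨t, htmem, htv⟩ := hsub hvmem
    have ht01 : t ∈ Icc (0:ℝ) 1 := by rwa [Set.uIcc_of_le zero_le_one] at htmem
    obtain ⟨m, hm⟩ := hint t ht01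
    rw [htv] at hm
    have h2 : ((2 * (m - c) : ℤ) : ℝ) = ((1 : ℤ) : ℝ) := by
      push_cast
      nlinarith [pi_pos]
    have := Int.cast_injective (α := ℝ) h2
    omega
  simp only [hd] at key
  linarith

open Classical in
noncomputable def windAux (γ : ℝ → Circle) : ℝ :=
  if h : ∃ f : ℝ → ℝ, ContinuousOn f (Icc 0 1) ∧ ∀ t ∈ Icc (0:ℝ) 1, Circle.exp (f t) = γ t
  then h.choose 1 - h.choose 0 else 0

lemma windAux_eq {γ : ℝ → Circle} {f : ℝ → ℝ} (hf : ContinuousOn f (Icc 0 1))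
    (hf' : ∀ t ∈ Icc (0:ℝ) 1, Circle.exp (f t) = γ t) :
    windAux γ = f 1 - f 0 := by
  have hex : ∃ f : ℝ → ℝ, ContinuousOn f (Icc 0 1) ∧
      ∀ t ∈ Icc (0:ℝ) 1, Circle.exp (f t) = γ t := ⟨f, hf, hf'⟩
  rw [windAux]
  rw [dif_pos hex]
  exact lift_winding_unique hex.choose_spec.1 hf hex.choose_spec.2 hf'



lemma windAux_eq_of_close {γ₁ γ₂ : ℝ → Circle} (h₁ : Continuous γ₁) (h₂ : Continuous γ₂)
    (hl₁ : γ₁ 1 = γ₁ 0) (hl₂ : γ₂ 1 = γ₂ 0)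
    (hclose : ∀ t ∈ Icc (0:ℝ) 1, dist (γ₁ t) (γ₂ t) < 1) :
    windAux γ₁ = windAux γ₂ := by
  obtain ⟨f, hf, hf'⟩ := exists_lift γ₁ h₁
  set r : ℝ → Circle := fun t => γ₂ t / γ₁ t with hr
  have hrc : Continuous r := h₂.div' h₁
  set g : ℝ → ℝ := fun t => f t + Complex.arg (Subtype.val (r t) : ℂ) with hg
  have hgc : ContinuousOn g (Icc 0 1) := by
    apply hf.add
    intro t ht
    have hre : 0 < (Subtype.val (r t) : ℂ).re := by
      apply re_pos_of_dist_lt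
      rw [dist_comm]
      exact hclose t ht
    have hcoe : Continuous fun t => (Subtype.val (r t) : ℂ) :=
      continuous_subtype_val.comp hrc
    apply ContinuousAt.continuousWithinAt
    exact ContinuousAt.comp (g := Complex.arg)
      (f := fun t => (Subtype.val (r t) : ℂ)) (x := t)
      (Complex.continuousAt_arg (Complex.mem_slitPlane_iff.mpr (Or.inl hre)))
      hcoe.continuousAt
  have hg' : ∀ t ∈ Icc (0:ℝ) 1, Circle.exp (g t) = γ₂ t := by
    intro t ht
    rw [hg]
    simp only []
    rw [Circle.exp_add, hf' t ht, Circle.exp_arg, hr]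
    exact mul_div_cancel _ _
  rw [windAux_eq hf hf', windAux_eq hgc hg']
  have : r 1 = r 0 := by rw [hr]; simp only []; rw [hl₁, hl₂]
  simp only [hg, this]
  ring

noncomputable def ee (t : ℝ) : Circle := Circle.exp (2 * π * t)

lemma ee_cont : Continuous ee := (Circle.exp).continuous.comp (by fun_prop)

lemma ee_loop : ee 1 = ee 0 := by
  simp [ee, Circle.exp_two_pi]

lemma windAux_homotopy_invariant {g₁ g₂ : C(Circle, Circle)} (hH : g₁.Homotopic g₂) :
    windAux (fun t => g₁ (ee t)) = windAux (fun t => g₂ (ee t)) := by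
  obtain ⟨H⟩ := hH
  set F : ℝ × ℝ → Circle := fun q => H (Set.projIcc 0 1 zero_le_one q.1, ee q.2) with hF
  have hFc : Continuous F := H.continuous.comp
    ((continuous_projIcc.comp continuous_fst).prodMk (ee_cont.comp continuous_snd))
  have hK : IsCompact (Icc (0:ℝ) 1 ×ˢ Icc (0:ℝ) 1) := isCompact_Icc.prod isCompact_Icc
  have huc := hK.uniformContinuousOn_of_continuous hFc.continuousOn
  replace huc := Metric.uniformContinuousOn_iff.mp huc
  obtain ⟨δ, hδpos, hδ⟩ := huc 1 one_pos
  obtain ⟨n, hn⟩ := exists_nat_one_div_lt hδpos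
  set N : ℕ := n + 1 with hN
  have hNpos : (0:ℝ) < (N : ℝ) := by positivity
  have hmesh : 1 / (N : ℝ) < δ := by exact_mod_cast hn
  have hjmem : ∀ j : ℕ, j ≤ N → (j : ℝ)/N ∈ Icc (0:ℝ) 1 := by
    intro j hj
    exact ⟨by positivity, by rw [div_le_one hNpos]; exact_mod_cast hj⟩
  have hslice : ∀ s : ℝ, Continuous fun t => F (s, t) :=
    fun s => hFc.comp (continuous_const.prodMk continuous_id)
  have hloop : ∀ s : ℝ, F (s, 1) = F (s, 0) := by
    intro s; simp only [hF, ee_loop]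
  have key : ∀ j : ℕ, j ≤ N →
      windAux (fun t => F ((j : ℝ)/N, t)) = windAux (fun t => F (0, t)) := by
    intro j
    induction j with
    | zero => intro _; norm_num
    | succ j ih =>
        intro hj
        rw [← ih (by omega)]
        apply windAux_eq_of_close (hslice _) (hslice _) (hloop _) (hloop _)
        intro t ht
        rw [dist_comm]
        have hc1 : ((j+1 : ℕ) : ℝ) = (j:ℝ)+1 := by push_cast; ring
        apply hδ ((j : ℝ)/N, t) ⟨hjmem j (by omega), ht⟩ (((j+1 : ℕ) : ℝ)/N, t)
          ⟨hjmem _ hj, ht⟩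
        rw [Prod.dist_eq]
        simp only [dist_self]
        rw [Real.dist_eq, hc1]
        have habs : |(j:ℝ)/N - ((j:ℝ)+1)/N| = 1/N := by
          rw [abs_of_nonpos (by rw [sub_nonpos]; gcongr <;> linarith)]
          ring
        rw [habs, max_eq_left (by positivity)]
        exact hmesh
  have hend := key N le_rfl
  have e0 : (fun t => F ((N:ℝ)/N, t)) = fun t => g₂ (ee t) := by
    funext t
    simp only [hF]
    rw [div_self hNpos.ne', show Set.projIcc (0:ℝ) 1 zero_le_one 1 = 1 from Set.projIcc_right _,
      H.apply_one]
  have e1 : (fun t => F (0, t)) = fun t => g₁ (ee t) := by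
    funext t
    simp only [hF]
    rw [show Set.projIcc (0:ℝ) 1 zero_le_one 0 = 0 from Set.projIcc_left _, H.apply_zero]
  rw [e0, e1] at hend
  exact hend.symm




lemma windAux_pow (d : ℤ) : windAux (fun t => (ee t) ^ d) = (d : ℝ) * (2 * π) := by
  have hf : ContinuousOn (fun t : ℝ => (d : ℝ) * (2 * π * t)) (Icc 0 1) := by fun_prop
  have hf' : ∀ t ∈ Icc (0:ℝ) 1, Circle.exp ((d : ℝ) * (2 * π * t)) = (ee t) ^ d :=
    fun t _ => exp_zpow _ _
  rw [windAux_eq hf hf']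
  ring

/-- The counting lemma. -/
lemma count_lemma {γ : ℝ → Circle} {f : ℝ → ℝ} (hf : ContinuousOn f (Icc 0 1))
    (hf' : ∀ t ∈ Icc (0:ℝ) 1, Circle.exp (f t) = γ t) (D : ℕ) (hD : 0 < D)
    (hwind : f 1 - f 0 = (D : ℝ) * (2 * π)) :
    ∃ S : Finset Circle, S.card = D ∧
      ∀ z ∈ S, ∃ t ∈ Icc (0:ℝ) 1, z = ee t ∧ γ t = 1 := by
  have h2pi : (0:ℝ) < 2 * π := by positivity
  -- IVT production of interior times
  have ivt : ∀ m : ℤ, f 0 < (m:ℝ) * (2*π) → (m:ℝ) * (2*π) < f 1 →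
      ∃ t ∈ Ioo (0:ℝ) 1, f t = (m:ℝ) * (2*π) := by
    intro m h1 h2
    have := intermediate_value_Ioo (α := ℝ) (a := 0) (b := 1) zero_le_one hf
    obtain ⟨t, ht, htv⟩ := this ⟨h1, h2⟩
    exact ⟨t, ht, htv⟩
  classical
  set φ : ℤ → ℝ := fun m =>
    if hm : ∃ t ∈ Ioo (0:ℝ) 1, f t = (m:ℝ) * (2*π) then hm.choose else 0 with hφ
  have hφspec : ∀ m : ℤ, f 0 < (m:ℝ) * (2*π) → (m:ℝ) * (2*π) < f 1 →
      φ m ∈ Ioo (0:ℝ) 1 ∧ f (φ m) = (m:ℝ) * (2*π) := by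
    intro m h1 h2
    have hm := ivt m h1 h2
    rw [hφ]
    simp only [dif_pos hm]
    exact ⟨hm.choose_spec.1, hm.choose_spec.2⟩
  -- generic image construction
  have main : ∀ M : Finset ℤ,
      (∀ m ∈ M, f 0 < (m:ℝ) * (2*π) ∧ (m:ℝ) * (2*π) < f 1) →
      ∃ T : Finset Circle, T.card = M.card ∧
        (∀ z ∈ T, ∃ t ∈ Icc (0:ℝ) 1, z = ee t ∧ γ t = 1) ∧ (1 : Circle) ∉ T := by
    intro M hM
    have hinj : Set.InjOn (fun m : ℤ => ee (φ m)) M := by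
      intro m hm m' hm' hEq
      obtain ⟨hmem, hval⟩ := hφspec m (hM m hm).1 (hM m hm).2
      obtain ⟨hmem', hval'⟩ := hφspec m' (hM m' hm').1 (hM m' hm').2
      have hEq' : Circle.exp (2 * π * φ m) = Circle.exp (2 * π * φ m') := hEq
      obtain ⟨j, hj⟩ := Circle.exp_eq_exp.mp hEq'
      have hzero : 2 * π * (φ m - φ m' - (j:ℝ)) = 0 := by linarith
      have : φ m - φ m' = (j : ℝ) := by
        rcases mul_eq_zero.mp hzero with h | h
        · exact absurd h h2pi.ne'
        · linarith
      have hj0 : j = 0 := by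
        have h1 : (j : ℝ) < 1 := by
          rw [← this]; have := hmem.2; have := hmem'.1; linarith
        have h2 : (-1 : ℝ) < (j : ℝ) := by
          rw [← this]; have := hmem.1; have := hmem'.2; linarith
        exact_mod_cast by
          have h1' : j < 1 := by exact_mod_cast h1
          have h2' : -1 < j := by exact_mod_cast h2
          omega
      have : φ m = φ m' := by
        rw [hj0] at this; push_cast at this; linarith
      have hmm : (m:ℝ) * (2*π) = (m':ℝ) * (2*π) := by
        rw [← hval, ← hval', this]
      have : (m:ℝ) = (m':ℝ) := mul_right_cancel₀ h2pi.ne' hmm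
      exact_mod_cast this
    refine ⟨M.image (fun m : ℤ => ee (φ m)), Finset.card_image_of_injOn hinj, ?_, ?_⟩
    · intro z hz
      obtain ⟨m, hm, rfl⟩ := Finset.mem_image.mp hz
      obtain ⟨hmem, hval⟩ := hφspec m (hM m hm).1 (hM m hm).2
      refine ⟨φ m, ⟨hmem.1.le, hmem.2.le⟩, rfl, ?_⟩
      rw [← hf' _ ⟨hmem.1.le, hmem.2.le⟩] at  *
      rw [hval]
      exact Circle.exp_int_mul_two_pi m
    · intro hone
      obtain ⟨m, hm, hEq⟩ := Finset.mem_image.mp hone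
      obtain ⟨hmem, hval⟩ := hφspec m (hM m hm).1 (hM m hm).2
      have hEq' : Circle.exp 0 = Circle.exp (2 * π * φ m) := by
        rw [Circle.exp_zero]; exact hEq.symm
      obtain ⟨j, hj⟩ := Circle.exp_eq_exp.mp hEq'
      have hzero : 2 * π * ((j:ℝ) + φ m) = 0 := by linarith
      have : φ m = (-j : ℝ) := by
        rcases mul_eq_zero.mp hzero with h | h
        · exact absurd h h2pi.ne'
        · linarith
      have h1 : (-j:ℝ) < 1 := by rw [← this]; exact hmem.2
      have h2 : (0:ℝ) < (-j:ℝ) := by rw [← this]; exact hmem.1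
      have h1' : -j < 1 := by exact_mod_cast h1
      have h2' : 0 < -j := by exact_mod_cast h2
      omega
  by_cases hB : ∃ m₀ : ℤ, f 0 = (m₀ : ℝ) * (2*π)
  · obtain ⟨m₀, hm₀⟩ := hB
    have hf1 : f 1 = ((m₀ + D : ℤ) : ℝ) * (2*π) := by push_cast; nlinarith [hwind]
    set M : Finset ℤ := Finset.Ioo m₀ (m₀ + D) with hM
    have hMbound : ∀ m ∈ M, f 0 < (m:ℝ) * (2*π) ∧ (m:ℝ) * (2*π) < f 1 := by
      intro m hm
      rw [Finset.mem_Ioo] at hm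
      constructor
      · rw [hm₀]; have : (m₀:ℝ) < m := by exact_mod_cast hm.1
        nlinarith
      · rw [hf1]; have : (m:ℝ) < ((m₀ + D : ℤ) : ℝ) := by exact_mod_cast hm.2
        nlinarith
    obtain ⟨T, hTcard, hTmem, hTone⟩ := main M hMbound
    refine ⟨insert 1 T, ?_, ?_⟩
    · rw [Finset.card_insert_of_notMem hTone, hTcard, hM, Int.card_Ioo]
      simp
      omega
    · intro z hz
      rcases Finset.mem_insert.mp hz with rfl | hz
      · refine ⟨0, ⟨le_refl 0, zero_le_one⟩, ?_, ?_⟩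
        · simp [ee]
        · rw [← hf' 0 (left_mem_Icc.mpr zero_le_one), hm₀]
          exact Circle.exp_int_mul_two_pi m₀
      · exact hTmem z hz
  · push_neg at hB
    set a : ℤ := ⌊f 0 / (2*π)⌋ with ha
    have haf : (a : ℝ) * (2*π) < f 0 := by
      rcases lt_or_eq_of_le (Int.floor_le (f 0 / (2*π))) with h | h
      · calc (a:ℝ) * (2*π) < (f 0 / (2*π)) * (2*π) := by nlinarith
          _ = f 0 := by field_simp
      · exfalso
        refine hB a ?_
        rw [ha, h]
        field_simp
    have hfb : f 0 < ((a:ℝ) + 1) * (2*π) := by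
      have hlt := Int.lt_floor_add_one (f 0 / (2*π))
      rw [← ha] at hlt
      calc f 0 = (f 0 / (2*π)) * (2*π) := by field_simp
        _ < ((a:ℝ) + 1) * (2*π) := by nlinarith
    set M : Finset ℤ := Finset.Icc (a+1) (a + D) with hM
    have hMbound : ∀ m ∈ M, f 0 < (m:ℝ) * (2*π) ∧ (m:ℝ) * (2*π) < f 1 := by
      intro m hm
      rw [Finset.mem_Icc] at hm
      have hm1 : ((a:ℝ) + 1) ≤ (m:ℝ) := by exact_mod_cast hm.1
      have hm2 : (m:ℝ) ≤ (a:ℝ) + D := by exact_mod_cast hm.2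
      constructor
      · nlinarith
      · nlinarith
    obtain ⟨T, hTcard, hTmem, _⟩ := main M hMbound
    refine ⟨T, ?_, hTmem⟩
    rw [hTcard, hM, Int.card_Icc]
    omega


end CircleDeg

open CircleDeg Set Real

/-- A continuous circle map of degree `k` has at least `|k - 1|` fixed points. -/
theorem circle_degree_fixed_points (h : C(Circle, Circle)) (k : ℤ)
    (hdeg : ContinuousMap.Homotopic h ⟨fun z => z ^ k, by fun_prop⟩) :
    ∃ S : Finset Circle, S.card = (k - 1).natAbs ∧ ∀ z ∈ S, h z = z := by
  by_cases hk : k = 1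
  · exact ⟨∅, by simp [hk], by simp⟩
  have hkne : k - 1 ≠ 0 := sub_ne_zero.mpr hk
  set g : C(Circle, Circle) := ⟨fun z => h z * z⁻¹, by fun_prop⟩ with hgdef
  obtain ⟨H⟩ := hdeg
  have hg2 : ContinuousMap.Homotopic g ⟨fun z => z ^ (k - 1), by fun_prop⟩ := by
    refine ⟨{ toFun := fun p => H p * (p.2)⁻¹,
              continuous_toFun := H.continuous.mul continuous_snd.inv,
              map_zero_left := ?_, map_one_left := ?_ }⟩
    · intro z
      simp only [ContinuousMap.Homotopy.apply_zero]
      rfl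
    · intro z
      simp only [ContinuousMap.Homotopy.apply_one]
      show z ^ k * z⁻¹ = z ^ (k - 1)
      exact (zpow_sub_one z k).symm
  have hw : windAux (fun t => g (ee t)) = ((k - 1 : ℤ) : ℝ) * (2 * π) := by
    rw [windAux_homotopy_invariant hg2]
    exact windAux_pow (k - 1)
  obtain ⟨f, hfc, hf'⟩ := exists_lift (fun t => g (ee t)) (g.continuous.comp ee_cont)
  have hfw : f 1 - f 0 = ((k - 1 : ℤ) : ℝ) * (2 * π) := by
    rw [← windAux_eq hfc hf']; exact hw
  set D : ℕ := (k - 1).natAbs with hD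
  have hDpos : 0 < D := Int.natAbs_pos.mpr hkne
  have hfix : ∀ t : ℝ, g (ee t) = 1 → h (ee t) = ee t := by
    intro t hgt
    have : h (ee t) * (ee t)⁻¹ = 1 := hgt
    exact mul_inv_eq_one.mp this
  rcases lt_or_gt_of_ne hkne with hneg | hpos
  · -- negative degree: use -f and the inverse loop
    have hcast : ((D : ℕ) : ℝ) = -((k - 1 : ℤ) : ℝ) := by
      have : ((D : ℕ) : ℤ) = -(k - 1) := by rw [hD]; omega
      exact_mod_cast congrArg (Int.cast : ℤ → ℝ) this
    obtain ⟨S, hScard, hSmem⟩ := count_lemma (γ := fun t => (g (ee t))⁻¹) (f := fun t => -(f t))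
      hfc.neg
      (fun t ht => by rw [Circle.exp_neg, hf' t ht])
      D hDpos (by show -f 1 - -f 0 = ((D:ℕ):ℝ) * (2*π); rw [hcast]; linarith)
    refine ⟨S, hScard, ?_⟩
    intro z hz
    obtain ⟨t, _, rfl, h1⟩ := hSmem z hz
    exact hfix t (inv_eq_one.mp h1)
  · have hcast : ((D : ℕ) : ℝ) = ((k - 1 : ℤ) : ℝ) := by
      have : ((D : ℕ) : ℤ) = k - 1 := by rw [hD]; omega
      exact_mod_cast congrArg (Int.cast : ℤ → ℝ) this
    obtain ⟨S, hScard, hSmem⟩ := count_lemma hfc hf' D hDpos (by rw [hcast]; exact hfw)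
    refine ⟨S, hScard, ?_⟩
    intro z hz
    obtain ⟨t, _, rfl, h1⟩ := hSmem z hz
    exact hfix t h1
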